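/- Let μ, μ̂ ∈ ℝ^n be positive vectors, assume the entries of μ̂ are non-decreasing (0 < μ̂₁ ≤ μ̂₂ ≤ … ≤ μ̂ₙ), and let σ be a permutation of {1,…,n} such that the sequence (μ_{σ(1)},…,μ_{σ(n)}) is non-decreasing. Then minᵢ (μᵢ/μ̂ᵢ) ≤ minᵢ (μ_{σ(i)}/μ̂ᵢ) and maxᵢ (μ_{σ(i)}/μ̂ᵢ) ≤ maxᵢ (μᵢ/μ̂ᵢ); that is, [minᵢ μ_{σ(i)}/μ̂ᵢ, maxᵢ μ_{σ(i)}/μ̂ᵢ] ⊆ [minᵢ μᵢ/μ̂ᵢ, maxᵢ μᵢ/μ̂ᵢ]. -/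
import Mathlib


open Matrix BigOperators

lemma perm_exists_le {n : ℕ} (σ : Equiv.Perm (Fin n)) (i : Fin n) :
    ∃ k, k ≤ i ∧ i ≤ σ k := by
  by_contra h
  push_neg at h
  have hmap : ∀ k ∈ Finset.Iic i, σ k ∈ Finset.Iio i := by
    intro k hk
    simp only [Finset.mem_Iic] at hk
    simpa using h k hk
  have hcard := Finset.card_le_card_of_injOn σ hmap (σ.injective.injOn)
  rw [Fin.card_Iic, Fin.card_Iio] at hcard
  omega

lemma perm_exists_ge {n : ℕ} (σ : Equiv.Perm (Fin n)) (i : Fin n) :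
    ∃ k, i ≤ k ∧ σ k ≤ i := by
  obtain ⟨k, hk1, hk2⟩ := perm_exists_le σ⁻¹ i
  exact ⟨σ⁻¹ k, hk2, by simpa using hk1⟩

/-- If `μ̂` has non-decreasing entries and `σ` is a permutation
sorting `μ` into non-decreasing order, then
`[minᵢ μ_{σ(i)}/μ̂ᵢ, maxᵢ μ_{σ(i)}/μ̂ᵢ] ⊆ [minᵢ μᵢ/μ̂ᵢ, maxᵢ μᵢ/μ̂ᵢ]`. -/
theorem stmt16 {n : ℕ} (μ μh : Fin n → ℝ)
    (hμpos : ∀ i, 0 < μ i) (hμhpos : ∀ i, 0 < μh i)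
    (hμhmono : Monotone μh)
    (σ : Equiv.Perm (Fin n))
    (hσ : Monotone fun i => μ (σ i)) :
    ((⨅ i, μ i / μh i) ≤ ⨅ i, μ (σ i) / μh i) ∧
    ((⨆ i, μ (σ i) / μh i) ≤ ⨆ i, μ i / μh i) ∧
    Set.Icc (⨅ i, μ (σ i) / μh i) (⨆ i, μ (σ i) / μh i) ⊆
      Set.Icc (⨅ i, μ i / μh i) (⨆ i, μ i / μh i) := by
  rcases Nat.eq_zero_or_pos n with hn | hn
  · subst hn
    simp [iInf, iSup, Set.range_eq_empty, Real.sInf_empty, Real.sSup_empty]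
  have : Nonempty (Fin n) := ⟨⟨0, hn⟩⟩
  have hbd1 : BddBelow (Set.range fun i => μ i / μh i) := by
    refine ⟨0, ?_⟩
    rintro x ⟨i, rfl⟩
    exact le_of_lt (div_pos (hμpos i) (hμhpos i))
  have hbd2 : BddAbove (Set.range fun i => μ (σ i) / μh i) :=
    (Set.finite_range _).bddAbove
  have h1 : (⨅ i, μ i / μh i) ≤ ⨅ i, μ (σ i) / μh i := by
    refine le_ciInf fun i => ?_
    obtain ⟨k, hk1, hk2⟩ := perm_exists_le σ i
    refine ciInf_le_of_le hbd1 (σ k) ?_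
    exact div_le_div₀ (le_of_lt (hμpos (σ i))) (hσ hk1) (hμhpos i) (hμhmono hk2)
  have h2 : (⨆ i, μ (σ i) / μh i) ≤ ⨆ i, μ i / μh i := by
    refine ciSup_le fun i => ?_
    obtain ⟨k, hk1, hk2⟩ := perm_exists_ge σ i
    refine le_ciSup_of_le (Set.finite_range _).bddAbove (σ k) ?_
    exact div_le_div₀ (le_of_lt (hμpos (σ k))) (hσ hk1) (hμhpos (σ k)) (hμhmono hk2)
  exact ⟨h1, h2, Set.Icc_subset_Icc h1 h2⟩
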